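/- Let V and W be complex Hilbert spaces. Let a be a sesquilinear form on V that is bounded with constant M ≥ 0 (|a(u,v)| ≤ M‖u‖_V‖v‖_V for all u,v ∈ V) and coercive with constant α > 0 (Re a(u,u) ≥ α‖u‖_V² for all u ∈ V). Let ǎ be a bounded coercive sesquilinear form on W, let J : W → V be a continuous linear operator, and let θ ∈ [0, π/2) be such that ǎ(v,v) − a(Jv,Jv) ∈ Σ̄_θ for all v ∈ W. Let η : V → ℂ be a continuous conjugate-linear functional, and suppose u ∈ V satisfies a(u,v) = η(v) for all v ∈ V, and ǔ ∈ W satisfies ǎ(ǔ,v) = η(Jv) for all v ∈ W. Then, with c := 1 + tan θ, one has ‖u − Jǔ‖_V² ≤ inf_{v ∈ W} ( (M²/α²)‖u − Jv‖_V² + (c²/(2α))·|ǎ(v,v) − a(Jv,Jv)| ). -/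

import Mathlib

/-- The closed sector `Σ̄_θ = {z ∈ ℂ : Re z ≥ 0 and |Im z| ≤ tan θ · Re z}`. -/
def sector (θ : ℝ) : Set ℂ :=
  {z : ℂ | 0 ≤ z.re ∧ |z.im| ≤ Real.tan θ * z.re}

private lemma aux_min {L A B : ℝ} (hA : 0 ≤ A) (hB : 0 ≤ B)
    (h : ∀ t : ℝ, 0 < t → L ≤ A * t ^ 2 + B / t ^ 2) :
    L ≤ 2 * Real.sqrt (A * B) := by
  rcases hA.eq_or_lt with hA0 | hA0
  · have hL : L ≤ 0 := by
      by_contra hL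
      push_neg at hL
      obtain ⟨t, ht⟩ : ∃ t : ℝ, t = Real.sqrt (B / L) + 1 := ⟨_, rfl⟩
      have htpos : (0:ℝ) < t := by rw [ht]; positivity
      have h2 : B / L + 1 ≤ t ^ 2 := by
        rw [ht]
        nlinarith [Real.sq_sqrt (div_nonneg hB hL.le), Real.sqrt_nonneg (B / L)]
      have h3 : B / t ^ 2 < L := by
        rw [div_lt_iff₀ (by positivity)]
        have hq : L * (B / L + 1) = B + L := by field_simp
        have hq2 : L * (B / L + 1) ≤ L * t ^ 2 := mul_le_mul_of_nonneg_left h2 hL.le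
        linarith
      have := h t htpos
      rw [← hA0] at this
      simp at this
      linarith
    have : (0:ℝ) ≤ 2 * Real.sqrt (A * B) := by positivity
    linarith
  · rcases hB.eq_or_lt with hB0 | hB0
    · have hL : L ≤ 0 := by
        by_contra hL
        push_neg at hL
        obtain ⟨t, ht⟩ : ∃ t : ℝ, t = Real.sqrt (L / (2 * A)) := ⟨_, rfl⟩
        have htpos : (0:ℝ) < t := by
          rw [ht]; exact Real.sqrt_pos.mpr (by positivity)
        have ht2 : t ^ 2 = L / (2 * A) := by rw [ht]; exact Real.sq_sqrt (by positivity)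
        have := h t htpos
        rw [← hB0, ht2] at this
        have hq : A * (L / (2 * A)) = L / 2 := by field_simp
        simp at this
        nlinarith
      have : (0:ℝ) ≤ 2 * Real.sqrt (A * B) := by positivity
      linarith
    · obtain ⟨t, ht⟩ : ∃ t : ℝ, t = Real.sqrt (Real.sqrt B / Real.sqrt A) := ⟨_, rfl⟩
      have hsa : 0 < Real.sqrt A := Real.sqrt_pos.mpr hA0
      have hsb : 0 < Real.sqrt B := Real.sqrt_pos.mpr hB0
      have htpos : 0 < t := by rw [ht]; exact Real.sqrt_pos.mpr (by positivity)
      have ht2 : t ^ 2 = Real.sqrt B / Real.sqrt A := by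
        rw [ht]; exact Real.sq_sqrt (by positivity)
      have hAA : Real.sqrt A * Real.sqrt A = A := Real.mul_self_sqrt hA
      have hBB : Real.sqrt B * Real.sqrt B = B := Real.mul_self_sqrt hB
      have h1 : A * t ^ 2 = Real.sqrt A * Real.sqrt B := by
        rw [ht2]; field_simp; nlinarith
      have h2 : B / t ^ 2 = Real.sqrt A * Real.sqrt B := by
        rw [ht2]; field_simp; nlinarith
      have h3 : Real.sqrt (A * B) = Real.sqrt A * Real.sqrt B := Real.sqrt_mul hA B
      have h4 := h t htpos
      rw [h1, h2] at h4
      rw [h3]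
      linarith

open Complex in
lemma sector_cs {W : Type*} [AddCommGroup W] [Module ℂ W]
    (b : W → W → ℂ)
    (h1 : ∀ x y z : W, b (x + y) z = b x z + b y z)
    (h2 : ∀ x y z : W, b z (x + y) = b z x + b z y)
    (h3 : ∀ (c : ℂ) (x y : W), b (c • x) y = c * b x y)
    (h4 : ∀ (c : ℂ) (x y : W), b x (c • y) = (starRingEnd ℂ) c * b x y)
    (τ : ℝ) (hτ : 0 ≤ τ)
    (hpos : ∀ x, 0 ≤ (b x x).re)
    (him : ∀ x, |(b x x).im| ≤ τ * (b x x).re)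
    (x y : W) :
    (b x y).re ≤ (1 + τ) * Real.sqrt ((b x x).re * (b y y).re) := by
  have key : ∀ x y : W, (b x y).re ≤ (1 + τ) / 2 * ((b x x).re + (b y y).re) := by
    intro x y
    have e2 : b (x + (-1 : ℂ) • y) (x + (-1 : ℂ) • y)
        = b x x - b x y - b y x + b y y := by
      rw [h1, h2, h2, h3, h4, h3, h4]
      simp only [map_neg, map_one]
      ring
    have e3 : b (x + Complex.I • y) (x + Complex.I • y)
        = b x x - Complex.I * b x y + Complex.I * b y x + b y y := by
      rw [h1, h2, h2, h3, h4, h3, h4]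
      simp only [Complex.conj_I]
      linear_combination (-(b y y)) * Complex.I_sq
    have e4 : b (x + (-Complex.I) • y) (x + (-Complex.I) • y)
        = b x x + Complex.I * b x y - Complex.I * b y x + b y y := by
      rw [h1, h2, h2, h3, h4, h3, h4]
      simp only [map_neg, Complex.conj_I, neg_neg]
      linear_combination (-(b y y)) * Complex.I_sq
    have q1 := hpos (x + (-1 : ℂ) • y)
    rw [e2] at q1
    simp only [Complex.add_re, Complex.sub_re] at q1
    have q3 := him (x + Complex.I • y)
    rw [e3] at q3
    have q4 := him (x + (-Complex.I) • y)
    rw [e4] at q4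
    simp only [Complex.add_re, Complex.sub_re, Complex.add_im, Complex.sub_im,
      Complex.mul_re, Complex.mul_im, Complex.I_re, Complex.I_im,
      zero_mul, one_mul, zero_sub, sub_zero, zero_add, mul_zero] at q3 q4
    rw [abs_le] at q3 q4
    obtain ⟨q3a, q3b⟩ := q3
    obtain ⟨q4a, q4b⟩ := q4
    linarith
  -- scaling
  obtain ⟨X, hX⟩ : ∃ X : ℝ, X = (b x x).re := ⟨_, rfl⟩
  obtain ⟨Y, hY⟩ : ∃ Y : ℝ, Y = (b y y).re := ⟨_, rfl⟩
  have hXn : 0 ≤ X := hX ▸ hpos x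
  have hYn : 0 ≤ Y := hY ▸ hpos y
  have scal : ∀ t : ℝ, 0 < t →
      (b x y).re ≤ ((1 + τ) / 2 * X) * t ^ 2 + ((1 + τ) / 2 * Y) / t ^ 2 := by
    intro t ht
    have hxy : b (((t : ℝ) : ℂ) • x) (((t⁻¹ : ℝ) : ℂ) • y) = b x y := by
      rw [h3, h4, Complex.conj_ofReal, ← mul_assoc, ← Complex.ofReal_mul,
        mul_inv_cancel₀ ht.ne']
      simp
    have hxx : (b (((t : ℝ) : ℂ) • x) (((t : ℝ) : ℂ) • x)).re = t ^ 2 * (b x x).re := by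
      rw [h3, h4, Complex.conj_ofReal, ← mul_assoc, ← Complex.ofReal_mul,
        Complex.re_ofReal_mul]
      ring
    have hyy : (b (((t⁻¹ : ℝ) : ℂ) • y) (((t⁻¹ : ℝ) : ℂ) • y)).re
        = (t ^ 2)⁻¹ * (b y y).re := by
      rw [h3, h4, Complex.conj_ofReal, ← mul_assoc, ← Complex.ofReal_mul,
        Complex.re_ofReal_mul]
      rw [← mul_inv, ← sq]
    have hk := key (((t : ℝ) : ℂ) • x) (((t⁻¹ : ℝ) : ℂ) • y)
    rw [hxy, hxx, hyy, ← hX, ← hY] at hk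
    have ht2 : (0:ℝ) < t ^ 2 := by positivity
    rw [div_eq_mul_inv]
    calc (b x y).re ≤ (1 + τ) / 2 * (t ^ 2 * X + (t ^ 2)⁻¹ * Y) := hk
      _ = (1 + τ) / 2 * X * t ^ 2 + (1 + τ) / 2 * Y * (t ^ 2)⁻¹ := by ring
  have := aux_min (by positivity) (by positivity) scal
  have heq : Real.sqrt ((1 + τ) / 2 * X * ((1 + τ) / 2 * Y))
      = (1 + τ) / 2 * Real.sqrt (X * Y) := by
    rw [show (1 + τ) / 2 * X * ((1 + τ) / 2 * Y) = ((1 + τ) / 2) ^ 2 * (X * Y) by ring,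
      Real.sqrt_mul (by positivity), Real.sqrt_sq (by positivity)]
  rw [heq] at this
  rw [← hX, ← hY]
  linarith

/-- Proposition: extended Céa lemma, infimum form. -/
theorem stmt_0
    {V W : Type*} [NormedAddCommGroup V] [InnerProductSpace ℂ V] [CompleteSpace V]
    [NormedAddCommGroup W] [InnerProductSpace ℂ W] [CompleteSpace W]
    (a : V →ₗ[ℂ] V →ₗ⋆[ℂ] ℂ) (M : ℝ) (hM : 0 ≤ M)
    (ha_bdd : ∀ u v : V, ‖a u v‖ ≤ M * ‖u‖ * ‖v‖)
    (α : ℝ) (hα : 0 < α) (ha_coer : ∀ u : V, α * ‖u‖ ^ 2 ≤ (a u u).re)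
    (a' : W →ₗ[ℂ] W →ₗ⋆[ℂ] ℂ)
    (ha'_bdd : ∃ M' : ℝ, ∀ w v : W, ‖a' w v‖ ≤ M' * ‖w‖ * ‖v‖)
    (ha'_coer : ∃ α' : ℝ, 0 < α' ∧ ∀ v : W, α' * ‖v‖ ^ 2 ≤ (a' v v).re)
    (J : W →L[ℂ] V) (θ : ℝ) (hθ : θ ∈ Set.Ico 0 (Real.pi / 2))
    (hsec : ∀ v : W, a' v v - a (J v) (J v) ∈ sector θ)
    (η : V →L⋆[ℂ] ℂ) (u : V) (hu : ∀ v : V, a u v = η v)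
    (u' : W) (hu' : ∀ v : W, a' u' v = η (J v)) :
    ‖u - J u'‖ ^ 2 ≤
      ⨅ v : W, (M ^ 2 / α ^ 2 * ‖u - J v‖ ^ 2 +
        (1 + Real.tan θ) ^ 2 / (2 * α) * ‖a' v v - a (J v) (J v)‖) := by
  obtain ⟨τ, hτdef⟩ : ∃ τ : ℝ, τ = Real.tan θ := ⟨_, rfl⟩
  have hτ : 0 ≤ τ := hτdef ▸ Real.tan_nonneg_of_nonneg_of_le_pi_div_two hθ.1 hθ.2.le
  obtain ⟨b, hbdef⟩ : ∃ b : W → W → ℂ, b = fun x y => a' x y - a (J x) (J y) := ⟨_, rfl⟩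
  have hbapp : ∀ x y : W, b x y = a' x y - a (J x) (J y) := fun x y => by rw [hbdef]
  have h1 : ∀ x y z : W, b (x + y) z = b x z + b y z := by
    intro x y z
    simp only [hbapp, map_add, LinearMap.add_apply]
    ring
  have h2 : ∀ x y z : W, b z (x + y) = b z x + b z y := by
    intro x y z
    simp only [hbapp, map_add]
    ring
  have h3 : ∀ (c : ℂ) (x y : W), b (c • x) y = c * b x y := by
    intro c x y
    simp only [hbapp, map_smul, LinearMap.smul_apply, smul_eq_mul]
    ring
  have h4 : ∀ (c : ℂ) (x y : W), b x (c • y) = (starRingEnd ℂ) c * b x y := by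
    intro c x y
    simp only [hbapp, map_smulₛₗ, smul_eq_mul, RingHom.id_apply]
    ring
  have hpos : ∀ x : W, 0 ≤ (b x x).re := fun x => hbapp x x ▸ (hsec x).1
  have him : ∀ x : W, |(b x x).im| ≤ τ * (b x x).re := by
    intro x
    rw [hbapp, hτdef]
    exact (hsec x).2
  have hcs := sector_cs b h1 h2 h3 h4 τ hτ hpos him
  -- subtractivity of b in the first slot
  have hsub1 : ∀ x y z : W, b (x - y) z = b x z - b y z := by
    intro x y z
    have hx : y + (x - y) = x := by abel
    have := h1 y (x - y) z
    rw [hx] at this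
    linear_combination -this
  -- the error e
  obtain ⟨e, hedef⟩ : ∃ e : V, e = u - J u' := ⟨_, rfl⟩
  have hae : ∀ w : W, a e (J w) = b u' w := by
    intro w
    rw [hedef, hbapp, map_sub, LinearMap.sub_apply, hu (J w), hu' w]
  apply le_ciInf
  intro v
  have hsplit : a e e = a e (u - J v) + (b v (v - u') - b (v - u') (v - u')) := by
    have he2 : e = (u - J v) + J (v - u') := by
      rw [hedef, map_sub]; abel
    calc a e e = a e ((u - J v) + J (v - u')) := by rw [← he2]
      _ = a e (u - J v) + a e (J (v - u')) := by rw [map_add]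
      _ = a e (u - J v) + b u' (v - u') := by rw [hae]
      _ = a e (u - J v) + (b v (v - u') - b (v - u') (v - u')) := by
          rw [hsub1]; ring
  obtain ⟨E, hE⟩ : ∃ E : ℝ, E = ‖e‖ := ⟨_, rfl⟩
  obtain ⟨D, hD⟩ : ∃ D : ℝ, D = ‖u - J v‖ := ⟨_, rfl⟩
  obtain ⟨X, hX⟩ : ∃ X : ℝ, X = (b v v).re := ⟨_, rfl⟩
  obtain ⟨Y, hY⟩ : ∃ Y : ℝ, Y = (b (v - u') (v - u')).re := ⟨_, rfl⟩
  obtain ⟨N, hN⟩ : ∃ N : ℝ, N = ‖b v v‖ := ⟨_, rfl⟩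
  have hEn : 0 ≤ E := hE ▸ norm_nonneg _
  have hDn : 0 ≤ D := hD ▸ norm_nonneg _
  have hXn : 0 ≤ X := hX ▸ hpos v
  have hYn : 0 ≤ Y := hY ▸ hpos (v - u')
  have hNn : 0 ≤ N := hN ▸ norm_nonneg _
  have hXN : X ≤ N := by
    rw [hX, hN]
    exact Complex.re_le_norm _
  -- coercivity
  have hco : α * E ^ 2 ≤ (a e e).re := by rw [hE]; exact ha_coer e
  -- bound on a e (u - J v)
  have hb1 : (a e (u - J v)).re ≤ M * E * D := by
    calc (a e (u - J v)).re ≤ ‖a e (u - J v)‖ :=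
          Complex.re_le_norm _
      _ ≤ M * ‖e‖ * ‖u - J v‖ := ha_bdd e (u - J v)
      _ = M * E * D := by rw [hE, hD]
  -- bound on b v (v - u')
  have hsq : Real.sqrt (X * Y) ^ 2 = X * Y := Real.sq_sqrt (by positivity)
  have hb2 : (b v (v - u')).re ≤ (1 + τ) ^ 2 / 4 * X + Y := by
    have := hcs v (v - u')
    rw [← hX, ← hY] at this
    have hs : (1 + τ) * Real.sqrt (X * Y) ≤ (1 + τ) ^ 2 / 4 * X + Y := by
      nlinarith [sq_nonneg ((1 + τ) / 2 * Real.sqrt X - Real.sqrt Y),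
        Real.sq_sqrt hXn, Real.sq_sqrt hYn, Real.sqrt_nonneg X, Real.sqrt_nonneg Y,
        Real.sqrt_mul hXn Y]
    linarith
  -- combine
  have hre : (a e e).re = (a e (u - J v)).re + ((b v (v - u')).re - Y) := by
    rw [hsplit, hY]
    simp [Complex.add_re, Complex.sub_re]
  have I1 : α * E ^ 2 ≤ M * E * D + (1 + τ) ^ 2 / 4 * X := by
    rw [hre] at hco
    linarith
  have I2 : 2 * α * (M * E * D) ≤ α ^ 2 * E ^ 2 + M ^ 2 * D ^ 2 := by
    nlinarith [sq_nonneg (α * E - M * D)]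
  have hpoly : E ^ 2 * (2 * α ^ 2) ≤ 2 * M ^ 2 * D ^ 2 + α * (1 + τ) ^ 2 * N := by
    have I1' : 2 * α * (α * E ^ 2) ≤ 2 * α * (M * E * D + (1 + τ) ^ 2 / 4 * X) :=
      mul_le_mul_of_nonneg_left I1 (by linarith)
    have hXN' : α * (1 + τ) ^ 2 * X ≤ α * (1 + τ) ^ 2 * N :=
      mul_le_mul_of_nonneg_left hXN (by positivity)
    linarith
  have hdiv : E ^ 2 ≤ (2 * M ^ 2 * D ^ 2 + α * (1 + τ) ^ 2 * N) / (2 * α ^ 2) :=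
    (le_div_iff₀ (by positivity)).2 hpoly
  have heq : M ^ 2 / α ^ 2 * D ^ 2 + (1 + τ) ^ 2 / (2 * α) * N
      = (2 * M ^ 2 * D ^ 2 + α * (1 + τ) ^ 2 * N) / (2 * α ^ 2) := by
    field_simp
  have hfin : E ^ 2 ≤ M ^ 2 / α ^ 2 * D ^ 2 + (1 + τ) ^ 2 / (2 * α) * N := by
    rw [heq]; exact hdiv
  rw [hE, hD, hN, hτdef, hbapp, hedef] at hfin
  exact hfin
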